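/- For every integer m ≥ 3 and every ε with 0 < ε < m, there exist a finite type set T with |T| = m, a non-uniform full-support probability distribution f on T, a finite outcome set O, a valuation v : T × O → ℝ≥0, and a mechanism M that is ε-EEIC and IR, such that every mechanism M' on the same data that is BIC and IR and satisfies W(M') ≥ W(M) must satisfy R(M') ≤ R(M) − m/2. In particular, no welfare-preserving ε-EEIC-to-BIC transformation can achieve revenue loss that vanishes as ε → 0. -/

import Mathlib

open Finset

lemma sum_delta (m j : ℕ) (hj : j < m) (w : ℝ) :
    ∑ i : Fin m, (if (i : ℕ) = j then w else 0) = w := by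
  rw [Finset.sum_eq_single (⟨j, hj⟩ : Fin m)]
  · simp
  · intro b _ hb
    exact if_neg fun hc => hb (Fin.ext hc)
  · intro h
    exact absurd (Finset.mem_univ _) h

lemma sum_three (m : ℕ) (hm : 3 ≤ m) (A B C : ℝ) :
    ∑ i : Fin m, (if (i : ℕ) = 0 then A else if (i : ℕ) = 1 then B else C)
      = A + B + ((m : ℝ) - 2) * C := by
  have h0 : (0:ℕ) < m := by omega
  have h1 : (1:ℕ) < m := by omega
  have key : ∀ i : Fin m,
      (if (i : ℕ) = 0 then A else if (i : ℕ) = 1 then B else C)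
        = C + ((if (i : ℕ) = 0 then A - C else 0) + (if (i : ℕ) = 1 then B - C else 0)) := by
    intro i
    by_cases ha : (i:ℕ) = 0
    · have hb : ¬ (i:ℕ) = 1 := by omega
      rw [if_pos ha, if_pos ha, if_neg hb]
      ring
    · by_cases hb : (i:ℕ) = 1
      · rw [if_neg ha, if_pos hb, if_neg ha, if_pos hb]
        ring
      · rw [if_neg ha, if_neg hb, if_neg ha, if_neg hb]
        ring
  rw [Finset.sum_congr rfl fun i _ => key i, Finset.sum_add_distrib,
    Finset.sum_add_distrib, Finset.sum_const, sum_delta m 0 h0, sum_delta m 1 h1]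
  simp only [Finset.card_univ, Fintype.card_fin, nsmul_eq_mul]
  ring

lemma sum_delta_mul {k : ℕ} (i : Fin k) (w : Fin k → ℝ) :
    ∑ o, (if o = i then (1:ℝ) else 0) * w o = w i := by
  rw [Finset.sum_eq_single i]
  · simp
  · intro b _ hb; rw [if_neg hb, zero_mul]
  · intro h; exact absurd (Finset.mem_univ _) h

theorem impossibility_EEIC_nonuniform
    (m : ℕ) (hm : 3 ≤ m) (ε : ℝ) (hε0 : 0 < ε) (hεm : ε < m) :
    ∃ (k : ℕ) (f : Fin m → ℝ) (v : Fin m → Fin k → ℝ)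
      (x : Fin m → Fin k → ℝ) (p : Fin m → ℝ),
      -- f is a full-support probability distribution ...
      (∀ t, 0 < f t) ∧ (∑ t, f t = 1) ∧
      -- ... which is non-uniform
      (∃ t t' : Fin m, f t ≠ f t') ∧
      (∀ t o, 0 ≤ v t o) ∧
      (∀ t o, 0 ≤ x t o) ∧ (∀ t, ∑ o, x t o = 1) ∧ (∀ t, 0 ≤ p t) ∧
      -- M is ε-EEIC
      (∑ t, f t *
        ((Finset.univ.sup' (Finset.univ_nonempty_iff.mpr ⟨⟨0, by omega⟩⟩)
            fun t' => (∑ o, x t' o * v t o) - p t')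
          - ((∑ o, x t o * v t o) - p t)) ≤ ε) ∧
      -- M is IR
      (∀ t : Fin m, 0 ≤ (∑ o, x t o * v t o) - p t) ∧
      -- every welfare-preserving BIC and IR mechanism loses at least m/2 revenue
      (∀ (x' : Fin m → Fin k → ℝ) (p' : Fin m → ℝ),
        (∀ t o, 0 ≤ x' t o) → (∀ t, ∑ o, x' t o = 1) → (∀ t, 0 ≤ p' t) →
        (∀ t t' : Fin m,
          (∑ o, x' t o * v t o) - p' t ≥ (∑ o, x' t' o * v t o) - p' t') →
        (∀ t : Fin m, 0 ≤ (∑ o, x' t o * v t o) - p' t) →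
        (∑ t, f t * ∑ o, x' t o * v t o) ≥ (∑ t, f t * ∑ o, x t o * v t o) →
        (∑ t, f t * p' t) ≤ (∑ t, f t * p t) - (m : ℝ) / 2) := by
  have hm0 : (0:ℕ) < m := by omega
  have hm1 : (1:ℕ) < m := by omega
  have hmR : (3:ℝ) ≤ (m:ℝ) := by exact_mod_cast hm
  have hm2 : (0:ℝ) < (m:ℝ) - 2 := by linarith
  have hmpos : (0:ℝ) < (m:ℝ) := by linarith
  have hεmR : ε < (m:ℝ) := hεm
  set τ : ℝ := ε / (8 * (m:ℝ)) with hτ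
  have hτpos : 0 < τ := by positivity
  have hτlt : τ < 1/8 := by
    rw [hτ, div_lt_iff₀ (by linarith : (0:ℝ) < 8 * (m:ℝ))]
    linarith
  set V : Fin m → ℝ := fun t => if (t:ℕ) = 0 then 1 else (m:ℝ) + 1 + ((t:ℕ):ℝ) with hV
  set v : Fin m → Fin m → ℝ := fun t o =>
    if (o:ℕ) = (t:ℕ) then V t
    else if (o:ℕ) + 1 = (t:ℕ) then (m:ℝ) + ((t:ℕ):ℝ) else 0 with hv
  set f : Fin m → ℝ := fun i =>
    if (i:ℕ) = 0 then 1/2 - τ else if (i:ℕ) = 1 then τ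
    else 1/(2*((m:ℝ)-2)) with hf
  -- basic facts about V
  have hV1 : ∀ t : Fin m, (1:ℝ) ≤ V t := by
    intro t
    simp only [hV]
    split_ifs
    · exact le_refl 1
    · have : (0:ℝ) ≤ ((t:ℕ):ℝ) := Nat.cast_nonneg _
      linarith
  have hV0 : ∀ t : Fin m, (0:ℝ) ≤ V t := fun t => le_trans zero_le_one (hV1 t)
  have hvtt : ∀ t : Fin m, v t t = V t := by
    intro t; simp [hv]
  have hvle : ∀ t o : Fin m, v t o ≤ V t := by
    intro t o
    simp only [hv]
    split_ifs with h1 h2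
    · exact le_refl _
    · simp only [hV]
      rw [if_neg (by omega)]
      linarith
    · exact hV0 t
  have hvlt : ∀ t o : Fin m, o ≠ t → v t o < V t := by
    intro t o ho
    simp only [hv]
    split_ifs with h1 h2
    · exact absurd (Fin.ext h1) ho
    · simp only [hV]
      rw [if_neg (by omega)]
      linarith
    · exact lt_of_lt_of_le zero_lt_one (hV1 t)
  have hvnn : ∀ t o : Fin m, 0 ≤ v t o := by
    intro t o
    simp only [hv]
    split_ifs
    · exact hV0 t
    · positivity
    · exact le_refl 0
  have hfpos : ∀ i : Fin m, 0 < f i := by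
    intro i
    simp only [hf]
    split_ifs
    · linarith
    · exact hτpos
    · positivity
  refine ⟨m, f, v, fun t o => if o = t then 1 else 0, V, hfpos, ?_, ?_, hvnn, ?_, ?_, ?_, ?_, ?_, ?_⟩
  · -- sum f = 1
    simp only [hf]
    rw [sum_three m hm]
    have : ((m:ℝ) - 2) * (1/(2*((m:ℝ)-2))) = 1/2 := by field_simp
    linarith
  · -- non-uniform
    refine ⟨⟨0, hm0⟩, ⟨1, hm1⟩, ?_⟩
    simp only [hf]
    norm_num
    intro h
    linarith
  · intro t o; dsimp only; split_ifs <;> norm_num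
  · intro t; simp
  · exact hV0
  · -- EEIC
    have hreg : ∀ t t' : Fin m, v t t' - V t' ≤ (if (t:ℕ) = 1 then (m:ℝ) else 0) := by
      intro t t'
      have hregnn : (0:ℝ) ≤ (if (t:ℕ) = 1 then (m:ℝ) else 0) := by
        split_ifs <;> linarith
      simp only [hv]
      by_cases h1 : (t':ℕ) = (t:ℕ)
      · rw [if_pos h1]
        have : t' = t := Fin.ext h1
        rw [this]
        linarith
      · rw [if_neg h1]
        by_cases h2 : (t':ℕ) + 1 = (t:ℕ)
        · rw [if_pos h2]
          by_cases ht : (t:ℕ) = 1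
          · rw [if_pos ht]
            have ht' : (t':ℕ) = 0 := by omega
            simp only [hV]
            rw [if_pos ht', ht]
            norm_num
          · rw [if_neg ht]
            simp only [hV]
            rw [if_neg (by omega : ¬ (t':ℕ) = 0)]
            have : ((t:ℕ):ℝ) = ((t':ℕ):ℝ) + 1 := by
              exact_mod_cast (by omega : (t:ℕ) = (t':ℕ) + 1)
            linarith
        · rw [if_neg h2]
          have := hV1 t'
          linarith
    calc ∑ t, f t *
        ((Finset.univ.sup' (Finset.univ_nonempty_iff.mpr ⟨⟨0, by omega⟩⟩)
            fun t' => (∑ o, (if o = t' then (1:ℝ) else 0) * v t o) - V t')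
          - ((∑ o, (if o = t then (1:ℝ) else 0) * v t o) - V t))
        ≤ ∑ t : Fin m, (if (t:ℕ) = 1 then τ * (m:ℝ) else 0) := by
          apply Finset.sum_le_sum
          intro t _
          have hsup : (Finset.univ.sup' (Finset.univ_nonempty_iff.mpr ⟨⟨0, by omega⟩⟩)
              fun t' => (∑ o, (if o = t' then (1:ℝ) else 0) * v t o) - V t')
              ≤ (if (t:ℕ) = 1 then (m:ℝ) else 0) := by
            apply Finset.sup'_le
            intro t' _
            rw [sum_delta_mul]
            exact hreg t t'
          have hown : (∑ o, (if o = t then (1:ℝ) else 0) * v t o) - V t = 0 := by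
            rw [sum_delta_mul, hvtt, sub_self]
          rw [hown, sub_zero]
          by_cases ht : (t:ℕ) = 1
          · rw [if_pos ht]
            have hft : f t = τ := by simp [hf, ht]
            rw [if_pos ht] at hsup
            rw [hft]
            exact mul_le_mul_of_nonneg_left hsup (le_of_lt hτpos)
          · rw [if_neg ht]
            rw [if_neg ht] at hsup
            have := (hfpos t).le
            nlinarith [hfpos t]
      _ = τ * (m:ℝ) := sum_delta m 1 hm1 _
      _ ≤ ε := by
          have : τ * (m:ℝ) = ε / 8 := by
            rw [hτ]; field_simp
          linarith
  · -- IR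
    intro t
    rw [sum_delta_mul, hvtt, sub_self]
  · -- main part
    intro x' p' hx'nn hx'sum hp'nn hBIC hIR' hW
    have hub : ∀ t : Fin m, ∑ o, x' t o * v t o ≤ V t := by
      intro t
      calc ∑ o, x' t o * v t o ≤ ∑ o, x' t o * V t :=
            Finset.sum_le_sum fun o _ => mul_le_mul_of_nonneg_left (hvle t o) (hx'nn t o)
        _ = V t := by rw [← Finset.sum_mul, hx'sum t, one_mul]
    have hWM : (∑ t, f t * ∑ o, (if o = t then (1:ℝ) else 0) * v t o) = ∑ t, f t * V t := by
      apply Finset.sum_congr rfl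
      intro t _
      rw [sum_delta_mul, hvtt]
    rw [hWM] at hW
    have hseq : ∀ t : Fin m, ∑ o, x' t o * v t o = V t := by
      by_contra hc
      push_neg at hc
      obtain ⟨t0, ht0⟩ := hc
      have hstrict : ∑ t, f t * ∑ o, x' t o * v t o < ∑ t, f t * V t := by
        apply Finset.sum_lt_sum
        · intro t _
          exact mul_le_mul_of_nonneg_left (hub t) (hfpos t).le
        · exact ⟨t0, Finset.mem_univ t0,
            mul_lt_mul_of_pos_left (lt_of_le_of_ne (hub t0) ht0) (hfpos t0)⟩
      linarith
    have hx'0 : ∀ j o : Fin m, o ≠ j → x' j o = 0 := by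
      intro j o ho
      have hz : ∑ o, x' j o * (V j - v j o) = 0 := by
        simp only [mul_sub]
        rw [Finset.sum_sub_distrib, ← Finset.sum_mul, hx'sum j, one_mul, hseq j, sub_self]
      have hterm := (Finset.sum_eq_zero_iff_of_nonneg
        (fun o _ => mul_nonneg (hx'nn j o) (sub_nonneg.2 (hvle j o)))).1 hz o (Finset.mem_univ o)
      rcases mul_eq_zero.1 hterm with h | h
      · exact h
      · have := hvlt j o ho
        linarith
    have hx'1 : ∀ j : Fin m, x' j j = 1 := by
      intro j
      have h1 := hx'sum j
      rw [Finset.sum_eq_single j (fun o _ ho => hx'0 j o ho)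
        (fun h => absurd (Finset.mem_univ j) h)] at h1
      exact h1
    have hrep : ∀ t j : Fin m, ∑ o, x' j o * v t o = v t j := by
      intro t j
      rw [Finset.sum_eq_single j (fun o _ ho => by rw [hx'0 j o ho, zero_mul])
        (fun h => absurd (Finset.mem_univ j) h), hx'1 j, one_mul]
    have hB : ∀ t j : Fin m, V t - p' t ≥ v t j - p' j := by
      intro t j
      have := hBIC t j
      rw [hseq t, hrep t j] at this
      exact this
    have hIRV : ∀ t : Fin m, 0 ≤ V t - p' t := by
      intro t
      have := hIR' t
      rw [hseq t] at this
      exact this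
    have hp'0 : p' ⟨0, hm0⟩ ≤ 1 := by
      have := hIRV ⟨0, hm0⟩
      simp only [hV] at this
      norm_num at this
      linarith
    have hrent : ∀ n : ℕ, ∀ h : n < m, 1 ≤ n → (m:ℝ) ≤ V ⟨n, h⟩ - p' ⟨n, h⟩ := by
      intro n
      induction n with
      | zero => intro h h1; omega
      | succ n ih =>
        intro h _
        by_cases hn : n = 0
        · subst hn
          have hb := hB ⟨1, h⟩ ⟨0, hm0⟩
          have hval : v ⟨1, h⟩ ⟨0, hm0⟩ = (m:ℝ) + 1 := by
            simp [hv]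
          rw [hval] at hb
          linarith
        · have hn1 : 1 ≤ n := by omega
          have h' : n < m := by omega
          have ihh := ih h' hn1
          have hb := hB ⟨n+1, h⟩ ⟨n, h'⟩
          have hval : v ⟨n+1, h⟩ ⟨n, h'⟩ = (m:ℝ) + ((n:ℝ) + 1) := by
            simp only [hv]
            rw [if_neg (by simp), if_pos (by simp)]
            push_cast
            ring
          have hVn : V ⟨n, h'⟩ = (m:ℝ) + 1 + (n:ℝ) := by
            simp only [hV]
            rw [if_neg (by simp [hn])]
          rw [hval] at hb
          rw [hVn] at ihh
          linarith
    have hp'le : ∀ t : Fin m, p' t ≤ V t - (if (t:ℕ) = 0 then 0 else (m:ℝ)) := by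
      intro t
      by_cases h : (t:ℕ) = 0
      · rw [if_pos h]
        have := hIRV t
        linarith
      · rw [if_neg h]
        have := hrent (t:ℕ) t.isLt (by omega)
        simp only [Fin.eta] at this
        linarith
    have hPW : (∑ t, f t * V t) = ∑ t, f t * V t := rfl
    calc ∑ t, f t * p' t
        ≤ ∑ t, f t * (V t - (if (t:ℕ) = 0 then 0 else (m:ℝ))) :=
          Finset.sum_le_sum fun t _ => mul_le_mul_of_nonneg_left (hp'le t) (hfpos t).le
      _ = (∑ t, f t * V t) - ∑ t, f t * (if (t:ℕ) = 0 then 0 else (m:ℝ)) := by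
          simp only [mul_sub]
          rw [Finset.sum_sub_distrib]
      _ ≤ (∑ t, f t * V t) - (m:ℝ)/2 := by
          have hsum : ∑ t : Fin m, f t * (if (t:ℕ) = 0 then 0 else (m:ℝ))
              = 0 + τ * (m:ℝ) + ((m:ℝ) - 2) * (1/(2*((m:ℝ)-2)) * (m:ℝ)) := by
            rw [← sum_three m hm 0 (τ * (m:ℝ)) (1/(2*((m:ℝ)-2)) * (m:ℝ))]
            apply Finset.sum_congr rfl
            intro t _
            simp only [hf]
            split_ifs <;> ring
          have hc : ((m:ℝ) - 2) * (1/(2*((m:ℝ)-2)) * (m:ℝ)) = (m:ℝ)/2 := by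
            field_simp
          have : (m:ℝ)/2 ≤ ∑ t : Fin m, f t * (if (t:ℕ) = 0 then 0 else (m:ℝ)) := by
            rw [hsum, hc]
            nlinarith [hτpos, hmpos]
          linarith
      _ = (∑ t, f t * V t) - (m:ℝ)/2 := rfl
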